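/- Let (X, μ) be a probability space, let α ≤ β be integers, and for each integer j with α ≤ j ≤ β let T_j : X → X be a measure-preserving map and η_j : X → ℝ a measurable function with 0 ≤ η_j ≤ 1 everywhere. Suppose there are nonnegative reals E_s for α < s ≤ β such that for every such s, | ∫_X (Π_{j=α}^{s−1} η_j(T_j x))·η_s(T_s x) dμ(x) − ( ∫_X Π_{j=α}^{s−1} η_j(T_j x) dμ(x) )·( ∫_X η_s dμ ) | ≤ E_s. Then | ∫_X Π_{j=α}^{β} η_j(T_j x) dμ(x) − Π_{j=α}^{β} ∫_X η_j dμ | ≤ Σ_{s=α+1}^{β} E_s · Π_{j=s+1}^{β} ∫_X η_j dμ, with the convention that the empty product (for s = β) equals 1. -/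

import Mathlib

open MeasureTheory

private lemma icc_insert_top (a b : ℤ) (h : a ≤ b + 1) :
    Finset.Icc a (b + 1) = insert (b + 1) (Finset.Icc a b) := by
  ext x; simp only [Finset.mem_Icc, Finset.mem_insert]; omega

/-- Iterated two-mixing estimate for a product of possibly different `[0,1]`-valued observables
composed with measure-preserving maps: the integral of the full product differs from the product
of the individual integrals by at most the sum of the decorrelation errors `E s`, each weighted
by the product of the integrals of the remaining factors. -/
theorem stmt_5 {X : Type*} [MeasurableSpace X] (μ : Measure X) [IsProbabilityMeasure μ]
    (α β : ℤ) (hαβ : α ≤ β)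
    (T : ℤ → X → X) (hT : ∀ j, α ≤ j → j ≤ β → MeasurePreserving (T j) μ μ)
    (η : ℤ → X → ℝ) (hη_meas : ∀ j, Measurable (η j))
    (hη0 : ∀ j x, 0 ≤ η j x) (hη1 : ∀ j x, η j x ≤ 1)
    (E : ℤ → ℝ) (hE : ∀ s, α < s → s ≤ β → 0 ≤ E s)
    (hmix : ∀ s, α < s → s ≤ β →
      |(∫ x, (∏ j ∈ Finset.Icc α (s - 1), η j (T j x)) * η s (T s x) ∂μ) -
        (∫ x, ∏ j ∈ Finset.Icc α (s - 1), η j (T j x) ∂μ) * ∫ x, η s x ∂μ| ≤ E s) :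
    |(∫ x, ∏ j ∈ Finset.Icc α β, η j (T j x) ∂μ) -
      ∏ j ∈ Finset.Icc α β, ∫ x, η j x ∂μ| ≤
      ∑ s ∈ Finset.Icc (α + 1) β, E s * ∏ j ∈ Finset.Icc (s + 1) β, ∫ x, η j x ∂μ := by
  revert hT hE hmix
  refine Int.le_induction (motive := fun b _ =>
      (∀ j, α ≤ j → j ≤ b → MeasurePreserving (T j) μ μ) →
      (∀ s, α < s → s ≤ b → 0 ≤ E s) →
      (∀ s, α < s → s ≤ b →
        |(∫ x, (∏ j ∈ Finset.Icc α (s - 1), η j (T j x)) * η s (T s x) ∂μ) -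
          (∫ x, ∏ j ∈ Finset.Icc α (s - 1), η j (T j x) ∂μ) * ∫ x, η s x ∂μ| ≤ E s) →
      |(∫ x, ∏ j ∈ Finset.Icc α b, η j (T j x) ∂μ) -
        ∏ j ∈ Finset.Icc α b, ∫ x, η j x ∂μ| ≤
        ∑ s ∈ Finset.Icc (α + 1) b, E s * ∏ j ∈ Finset.Icc (s + 1) b, ∫ x, η j x ∂μ)
    ?_ ?_ β hαβ
  · intro hT hE hmix
    have hcomp : ∫ x, η α (T α x) ∂μ = ∫ x, η α x ∂μ := by
      have h1 := (hT α le_rfl le_rfl).map_eq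
      have h2 := integral_map (μ := μ) (φ := T α)
        (hT α le_rfl le_rfl).measurable.aemeasurable (hη_meas α).aestronglyMeasurable
      rw [h1] at h2
      exact h2.symm
    simp [Finset.Icc_self, hcomp, Finset.Icc_eq_empty (by omega : ¬ (α + 1 ≤ α))]
  · intro β hβ ih hT hE hmix
    have hT' : ∀ j, α ≤ j → j ≤ β → MeasurePreserving (T j) μ μ :=
      fun j h1 h2 => hT j h1 (by omega)
    have ihb := ih hT' (fun s h1 h2 => hE s h1 (by omega))
      (fun s h1 h2 => hmix s h1 (by omega))
    have hI0 : (0:ℝ) ≤ ∫ x, η (β+1) x ∂μ := integral_nonneg (hη0 _)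
    have hmix' := hmix (β+1) (by omega) le_rfl
    simp only [add_sub_cancel_right] at hmix'
    -- rewrite goal
    rw [icc_insert_top α β (by omega), icc_insert_top (α+1) β (by omega),
      Finset.sum_insert (by simp only [Finset.mem_Icc]; omega)]
    simp only [Finset.prod_insert (show (β+1) ∉ Finset.Icc α β by
      simp only [Finset.mem_Icc]; omega)]
    have hA : (∫ x, η (β+1) (T (β+1) x) * ∏ j ∈ Finset.Icc α β, η j (T j x) ∂μ)
        = ∫ x, (∏ j ∈ Finset.Icc α β, η j (T j x)) * η (β+1) (T (β+1) x) ∂μ := by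
      refine integral_congr_ae (Filter.Eventually.of_forall fun x => ?_); ring
    have hRHS : E (β+1) * ∏ j ∈ Finset.Icc (β+1+1) (β+1), ∫ x, η j x ∂μ
        + ∑ s ∈ Finset.Icc (α+1) β, E s * ∏ j ∈ Finset.Icc (s+1) (β+1), ∫ x, η j x ∂μ
        = E (β+1) + (∫ x, η (β+1) x ∂μ) *
          ∑ s ∈ Finset.Icc (α+1) β, E s * ∏ j ∈ Finset.Icc (s+1) β, ∫ x, η j x ∂μ := by
      rw [Finset.Icc_eq_empty (by omega : ¬ (β+1+1 ≤ β+1)), Finset.prod_empty, mul_one,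
        Finset.mul_sum]
      refine congrArg (E (β+1) + ·) (Finset.sum_congr rfl fun s hs => ?_)
      rw [icc_insert_top (s+1) β (by simp only [Finset.mem_Icc] at hs; omega),
        Finset.prod_insert (by simp only [Finset.mem_Icc]; omega)]
      ring
    rw [hA, hRHS]
    calc |(∫ x, (∏ j ∈ Finset.Icc α β, η j (T j x)) * η (β+1) (T (β+1) x) ∂μ) -
          (∫ x, η (β+1) x ∂μ) * ∏ j ∈ Finset.Icc α β, ∫ x, η j x ∂μ|
        = |((∫ x, (∏ j ∈ Finset.Icc α β, η j (T j x)) * η (β+1) (T (β+1) x) ∂μ) -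
            (∫ x, ∏ j ∈ Finset.Icc α β, η j (T j x) ∂μ) * ∫ x, η (β+1) x ∂μ)
          + (∫ x, η (β+1) x ∂μ) * ((∫ x, ∏ j ∈ Finset.Icc α β, η j (T j x) ∂μ) -
            ∏ j ∈ Finset.Icc α β, ∫ x, η j x ∂μ)| := by congr 1; ring
      _ ≤ |(∫ x, (∏ j ∈ Finset.Icc α β, η j (T j x)) * η (β+1) (T (β+1) x) ∂μ) -
            (∫ x, ∏ j ∈ Finset.Icc α β, η j (T j x) ∂μ) * ∫ x, η (β+1) x ∂μ|
          + |(∫ x, η (β+1) x ∂μ) * ((∫ x, ∏ j ∈ Finset.Icc α β, η j (T j x) ∂μ) -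
            ∏ j ∈ Finset.Icc α β, ∫ x, η j x ∂μ)| := abs_add_le _ _
      _ ≤ E (β+1) + (∫ x, η (β+1) x ∂μ) *
            ∑ s ∈ Finset.Icc (α+1) β, E s * ∏ j ∈ Finset.Icc (s+1) β, ∫ x, η j x ∂μ := by
          refine add_le_add hmix' ?_
          rw [abs_mul, abs_of_nonneg hI0]
          exact mul_le_mul_of_nonneg_left ihb hI0
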